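/- Let n ≥ 1 and let q_1,…,q_n, c_1,…,c_n be nonnegative reals with q_i > 0, sorted so that c_i/q_i is nondecreasing in i. Let UA = max_{k ∈ [n]} (1 - c_k/q_k)·∑_{i=1}^{k} q_i. Then for every subset S ⊆ [n], ∑_{ℓ∈S}(q_ℓ - c_ℓ) ≤ UA · ∑_{ℓ∈S} q_ℓ / (∑_{i=1}^{ℓ} q_i). -/

import Mathlib

theorem welfare_le_UA_times_sum_q (n : ℕ) (hn : 1 ≤ n) (q c : ℕ → ℝ)
    (hq : ∀ i ∈ Finset.Icc 1 n, 0 < q i ∧ q i ≤ 1)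
    (hc : ∀ i ∈ Finset.Icc 1 n, 0 ≤ c i ∧ c i ≤ q i)
    (hsorted : ∀ i ∈ Finset.Icc 1 n, ∀ j ∈ Finset.Icc 1 n, i ≤ j → c i / q i ≤ c j / q j)
    (UA : ℝ)
    (hUA : UA = (Finset.Icc 1 n).sup' (Finset.nonempty_Icc.mpr hn)
      (fun k => (1 - c k / q k) * ∑ i ∈ Finset.Icc 1 k, q i)) :
    ∀ S ⊆ Finset.Icc 1 n,
      ∑ ℓ ∈ S, (q ℓ - c ℓ) ≤ UA * ∑ ℓ ∈ S, q ℓ / (∑ i ∈ Finset.Icc 1 ℓ, q i) := by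
  intro S hS
  rw [Finset.mul_sum]
  apply Finset.sum_le_sum
  intro ℓ hℓ
  have hℓn := hS hℓ
  obtain ⟨h1, h2⟩ := Finset.mem_Icc.mp hℓn
  have hQ : 0 < ∑ i ∈ Finset.Icc 1 ℓ, q i := by
    apply Finset.sum_pos
    · intro i hi
      obtain ⟨hi1, hi2⟩ := Finset.mem_Icc.mp hi
      exact (hq i (Finset.mem_Icc.mpr ⟨hi1, hi2.trans h2⟩)).1
    · exact Finset.nonempty_Icc.mpr h1
  have hqℓ : 0 < q ℓ := (hq ℓ hℓn).1
  have key : (1 - c ℓ / q ℓ) * ∑ i ∈ Finset.Icc 1 ℓ, q i ≤ UA := by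
    rw [hUA]
    exact Finset.le_sup' (fun k => (1 - c k / q k) * ∑ i ∈ Finset.Icc 1 k, q i) hℓn
  have heq : q ℓ - c ℓ = ((1 - c ℓ / q ℓ) * ∑ i ∈ Finset.Icc 1 ℓ, q i) *
      (q ℓ / ∑ i ∈ Finset.Icc 1 ℓ, q i) := by
    field_simp
  rw [heq]
  exact mul_le_mul_of_nonneg_right key (div_nonneg hqℓ.le hQ.le)
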